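/- Let σ < 0, δ < 0 with σ² + 4δ > 0, let A = [[σ, δ], [1, 0]], and let r₂ = (σ − √(σ² + 4δ))/2. Fix ρ ≥ 0 and let R₃ = {(x, y) ∈ Σ_ρ⁺ \ Σ_ρ : x < r₂·y}. Then for every q ∈ R₃ there exists t² > 0 such that exp(t²·A)·q ∈ Σ_ρ. -/

import Mathlib

set_option maxHeartbeats 1600000

open Matrix Filter

theorem stmt_6 (σ δ ρ : ℝ) (hσ : σ < 0) (hδ : δ < 0) (hdisc : 0 < σ ^ 2 + 4 * δ)
    (hρ : 0 ≤ ρ)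
    (A : Matrix (Fin 2) (Fin 2) ℝ) (hA : A = !![σ, δ; 1, 0])
    (r₂ : ℝ) (hr₂ : r₂ = (σ - Real.sqrt (σ ^ 2 + 4 * δ)) / 2)
    (h : (Fin 2 → ℝ) → ℝ)
    (hh : ∀ p : Fin 2 → ℝ, h p = if p 0 ≤ 0 then p 1 else p 1 - ρ * p 0)
    (Sig SigPlus R₃ : Set (Fin 2 → ℝ))
    (hSig : Sig = {p | h p = 0}) (hSigPlus : SigPlus = {p | 0 ≤ h p})
    (hR₃ : R₃ = {p ∈ SigPlus \ Sig | p 0 < r₂ * p 1}) :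
    ∀ q ∈ R₃, ∃ t₂ : ℝ, 0 < t₂ ∧ (NormedSpace.exp (t₂ • A)).mulVec q ∈ Sig := by
  intro q hq
  set s : ℝ := Real.sqrt (σ ^ 2 + 4 * δ) with hs_def
  have hs : 0 < s := Real.sqrt_pos.mpr hdisc
  have hs2 : s ^ 2 = σ ^ 2 + 4 * δ := Real.sq_sqrt hdisc.le
  set r₁ : ℝ := (σ + s) / 2 with hr₁
  have hr1q : r₁ ^ 2 = σ * r₁ + δ := by
    have : r₁ ^ 2 - σ * r₁ - δ = (s ^ 2 - (σ ^ 2 + 4 * δ)) / 4 := by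
      rw [hr₁]; ring
    nlinarith [this]
  have hr2q : r₂ ^ 2 = σ * r₂ + δ := by
    have : r₂ ^ 2 - σ * r₂ - δ = (s ^ 2 - (σ ^ 2 + 4 * δ)) / 4 := by
      rw [hr₂]; ring
    nlinarith [this]
  have hr12 : r₁ - r₂ = s := by rw [hr₁, hr₂]; ring
  -- diagonalization
  set P : Matrix (Fin 2) (Fin 2) ℝ := !![r₁, r₂; 1, 1] with hP
  set Q : Matrix (Fin 2) (Fin 2) ℝ := s⁻¹ • !![1, -r₂; -1, r₁] with hQ
  have hPQ : P * Q = 1 := by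
    ext i j
    fin_cases i <;> fin_cases j <;>
      simp [hP, hQ, Matrix.mul_apply, Fin.sum_univ_two, Matrix.one_apply] <;>
      field_simp <;> nlinarith [hr12]
  have hQP : Q * P = 1 := by
    ext i j
    fin_cases i <;> fin_cases j <;>
      simp [hP, hQ, Matrix.mul_apply, Fin.sum_univ_two, Matrix.one_apply] <;>
      field_simp <;> nlinarith [hr12]
  set D : Matrix (Fin 2) (Fin 2) ℝ := Matrix.diagonal ![r₁, r₂] with hD
  have hAP : A * P = P * D := by
    rw [hA]
    ext i j
    fin_cases i <;> fin_cases j <;>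
      simp [hP, hD, Matrix.mul_apply, Fin.sum_univ_two, Matrix.diagonal_apply] <;>
      nlinarith [hr1q, hr2q]
  have hAPDQ : A = P * D * Q :=
    calc A = A * (P * Q) := by rw [hPQ, Matrix.mul_one]
    _ = (A * P) * Q := by rw [Matrix.mul_assoc]
    _ = P * D * Q := by rw [hAP]
  have hAeq : ∀ t : ℝ, t • A = P * Matrix.diagonal ![t * r₁, t * r₂] * Q := by
    intro t
    have hDt : Matrix.diagonal ![t * r₁, t * r₂] = t • D := by
      rw [hD, ← Matrix.diagonal_smul]
      congr 1
      funext i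
      fin_cases i <;> simp
    rw [hDt]
    have e1 : P * (t • D) = t • (P * D) := mul_smul_comm t P D
    have e2 : (t • (P * D)) * Q = t • (P * D * Q) := smul_mul_assoc t (P * D) Q
    exact (((congrArg (· * Q) e1).trans e2).trans (congrArg (t • ·) hAPDQ.symm)).symm
  -- coordinates
  set a : ℝ := (q 0 - r₂ * q 1) / s with ha_def
  set b : ℝ := (r₁ * q 1 - q 0) / s with hb_def
  set X : ℝ → ℝ := fun t => r₁ * a * Real.exp (t * r₁) + r₂ * b * Real.exp (t * r₂) with hX
  set Y : ℝ → ℝ := fun t => a * Real.exp (t * r₁) + b * Real.exp (t * r₂) with hY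
  have hvec : ∀ t : ℝ, (NormedSpace.exp (t • A)).mulVec q = ![X t, Y t] := by
    intro t
    let U : (Matrix (Fin 2) (Fin 2) ℝ)ˣ := ⟨P, Q, hPQ, hQP⟩
    have hUc : (↑U : Matrix (Fin 2) (Fin 2) ℝ) = P := rfl
    have hUc' : (↑U⁻¹ : Matrix (Fin 2) (Fin 2) ℝ) = Q := rfl
    rw [hAeq t, ← hUc, ← hUc', Matrix.exp_units_conj U, Matrix.exp_diagonal, hUc, hUc']
    have hdiagexp : NormedSpace.exp (![t * r₁, t * r₂] : Fin 2 → ℝ)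
        = ![Real.exp (t * r₁), Real.exp (t * r₂)] := by
      funext i
      rw [Pi.coe_exp, ← Real.exp_eq_exp_ℝ]
      fin_cases i <;> simp
    rw [hdiagexp]
    have hQq : Q.mulVec q = ![a, b] := by
      funext i
      fin_cases i <;>
        simp [hQ, Matrix.mulVec, dotProduct, Fin.sum_univ_two, ha_def, hb_def] <;>
        field_simp <;> ring
    have hDq : (Matrix.diagonal ![Real.exp (t * r₁), Real.exp (t * r₂)]).mulVec ![a, b]
        = ![Real.exp (t * r₁) * a, Real.exp (t * r₂) * b] := by
      funext i
      fin_cases i <;> simp [Matrix.mulVec_diagonal]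
    have hPv : P.mulVec ![Real.exp (t * r₁) * a, Real.exp (t * r₂) * b] = ![X t, Y t] := by
      funext i
      fin_cases i <;>
        simp [hP, hX, hY, Matrix.mulVec, dotProduct, Fin.sum_univ_two] <;> ring
    rw [← Matrix.mulVec_mulVec, ← Matrix.mulVec_mulVec, hQq, hDq, hPv]
  -- h of the trajectory
  set g : ℝ → ℝ := fun t => Y t - ρ * max (X t) 0 with hg
  have hhg : ∀ t : ℝ, h ((NormedSpace.exp (t • A)).mulVec q) = g t := by
    intro t
    rw [hvec t, hh]
    simp only [hg]
    by_cases hx : X t ≤ 0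
    · simp [hx, max_eq_right hx]
    · push_neg at hx
      simp [not_le.mpr hx, max_eq_left hx.le]
  have hgcont : Continuous g := by
    have hXc : Continuous X := by
      rw [hX]
      fun_prop
    have hYc : Continuous Y := by
      rw [hY]
      fun_prop
    exact hYc.sub (continuous_const.mul (hXc.max continuous_const))
  -- initial data
  rw [hR₃] at hq
  obtain ⟨⟨hqplus, hqsig⟩, hqx⟩ := hq
  rw [hSigPlus] at hqplus; rw [hSig] at hqsig
  have hq0 : 0 < h q := lt_of_le_of_ne hqplus (Ne.symm hqsig)
  have hexp0 : (NormedSpace.exp ((0:ℝ) • A)).mulVec q = q := by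
    rw [zero_smul, NormedSpace.exp_zero, Matrix.one_mulVec]
  have hg0 : 0 < g 0 := by
    have h0 := hhg 0
    rw [hexp0] at h0
    rw [← h0]; exact hq0
  -- a < 0
  have ha_neg : a < 0 := by
    rw [ha_def]
    apply div_neg_of_neg_of_pos _ hs
    linarith [hqx]
  -- find T with Y T < 0
  have hYneg : ∃ T : ℝ, 0 < T ∧ Y T < 0 := by
    have hlim : Tendsto (fun T : ℝ => a * Real.exp (T * s) + b) atTop atBot := by
      apply Filter.tendsto_atBot_add_const_right
      have h1 : Tendsto (fun T : ℝ => Real.exp (T * s)) atTop atTop :=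
        Real.tendsto_exp_atTop.comp (Filter.tendsto_id.atTop_mul_const hs)
      exact Filter.Tendsto.const_mul_atTop_of_neg ha_neg h1
    have hev : ∀ᶠ T in atTop, a * Real.exp (T * s) + b < 0 := hlim.eventually_lt_atBot 0
    have hev2 : ∀ᶠ T in (atTop : Filter ℝ), 0 < T := eventually_gt_atTop 0
    obtain ⟨T, hT1, hT2⟩ := (hev.and hev2).exists
    refine ⟨T, hT2, ?_⟩
    have hfac : Y T = Real.exp (T * r₂) * (a * Real.exp (T * s) + b) := by
      have hTs : T * r₁ = T * r₂ + T * s := by rw [← hr12]; ring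
      show a * Real.exp (T * r₁) + b * Real.exp (T * r₂) = _
      rw [hTs, Real.exp_add]
      ring
    rw [hfac]
    exact mul_neg_of_pos_of_neg (Real.exp_pos _) hT1
  obtain ⟨T, hTpos, hYT⟩ := hYneg
  have hgT : g T < 0 := by
    rw [hg]
    simp only
    have : 0 ≤ ρ * max (X T) 0 := mul_nonneg hρ (le_max_right _ _)
    linarith
  -- IVT
  have hsub : Set.Icc (g T) (g 0) ⊆ g '' Set.Icc 0 T :=
    intermediate_value_Icc' hTpos.le hgcont.continuousOn
  obtain ⟨t₂, ht₂mem, ht₂⟩ := hsub ⟨hgT.le, hg0.le⟩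
  refine ⟨t₂, ?_, ?_⟩
  · rcases lt_or_eq_of_le ht₂mem.1 with h' | h'
    · exact h'
    · exfalso
      rw [← h'] at ht₂
      linarith
  · rw [hSig]
    show h _ = 0
    rw [hhg t₂, ht₂]
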